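/- Every twice differentiable function p : (0, π) → ℝ satisfying p''(r) − p(r) = 2 p'(r) cot r for all r ∈ (0, π) is of the form p(r) = c₁ cos r + c₂ (sin r − r cos r) for some real constants c₁, c₂. -/

import Mathlib

open Real Set

/-- A function with zero derivative on (0, π) is constant there (equal to its value at π/2). -/
lemma const_on_Ioo_pi (f : ℝ → ℝ) (h : ∀ r ∈ Ioo (0 : ℝ) π, HasDerivAt f 0 r) :
    ∀ x ∈ Ioo (0 : ℝ) π, f x = f (π / 2) := by
  intro x hx
  have hpi2 : (π / 2) ∈ Ioo (0 : ℝ) π :=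
    ⟨by positivity, by linarith [pi_pos]⟩
  have hcont : ∀ s ⊆ Ioo (0 : ℝ) π, ContinuousOn f s := by
    intro s hs
    exact fun y hy => ((h y (hs hy)).differentiableAt.continuousAt.continuousWithinAt)
  rcases le_or_gt x (π / 2) with hle | hlt
  · have hsub : Icc x (π / 2) ⊆ Ioo (0 : ℝ) π := fun y hy =>
      ⟨lt_of_lt_of_le hx.1 hy.1, lt_of_le_of_lt hy.2 hpi2.2⟩
    have := constant_of_has_deriv_right_zero (hcont _ hsub)
      (fun y hy => ((h y (hsub (Ico_subset_Icc_self hy))).hasDerivWithinAt))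
      (π / 2) (right_mem_Icc.mpr hle)
    exact this.symm
  · have hsub : Icc (π / 2) x ⊆ Ioo (0 : ℝ) π := fun y hy =>
      ⟨lt_of_lt_of_le hpi2.1 hy.1, lt_of_le_of_lt hy.2 hx.2⟩
    exact constant_of_has_deriv_right_zero (hcont _ hsub)
      (fun y hy => ((h y (hsub (Ico_subset_Icc_self hy))).hasDerivWithinAt))
      x (right_mem_Icc.mpr hlt.le)

/-- Every twice differentiable solution of p'' − p = 2 p' cot r on (0, π) has the form
p(r) = c₁ cos r + c₂ (sin r − r cos r). -/
theorem p_ode_general_solution (p : ℝ → ℝ)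
    (hd : ∀ r ∈ Ioo (0 : ℝ) π, DifferentiableAt ℝ p r)
    (hd' : ∀ r ∈ Ioo (0 : ℝ) π, DifferentiableAt ℝ (deriv p) r)
    (hode : ∀ r ∈ Ioo (0 : ℝ) π,
      deriv (deriv p) r - p r = 2 * deriv p r * Real.cot r) :
    ∃ c1 c2 : ℝ, ∀ r ∈ Ioo (0 : ℝ) π,
      p r = c1 * Real.cos r + c2 * (Real.sin r - r * Real.cos r) := by
  set F1 : ℝ → ℝ := fun r =>
    (p r * (r * Real.sin r) - deriv p r * (Real.sin r - r * Real.cos r)) / (Real.sin r) ^ 2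
    with hF1
  set F2 : ℝ → ℝ := fun r =>
    (deriv p r * Real.cos r + p r * Real.sin r) / (Real.sin r) ^ 2 with hF2
  have hsin : ∀ r ∈ Ioo (0 : ℝ) π, Real.sin r ≠ 0 := fun r hr =>
    ne_of_gt (Real.sin_pos_of_pos_of_lt_pi hr.1 hr.2)
  have hder : ∀ r ∈ Ioo (0 : ℝ) π, HasDerivAt F1 0 r ∧ HasDerivAt F2 0 r := by
    intro r hr
    have hs := hsin r hr
    have hp := (hd r hr).hasDerivAt
    have hp' := (hd' r hr).hasDerivAt
    have hode' : deriv (deriv p) r = p r + 2 * deriv p r * (Real.cos r / Real.sin r) := by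
      have h := hode r hr
      rw [Real.cot_eq_cos_div_sin] at h
      linarith
    -- derivative of r * sin r
    have h1 : HasDerivAt (fun r : ℝ => r * Real.sin r) (Real.sin r + r * Real.cos r) r := by
      simpa using (hasDerivAt_id r).fun_mul (Real.hasDerivAt_sin r)
    -- derivative of sin r - r * cos r
    have h2 : HasDerivAt (fun r : ℝ => Real.sin r - r * Real.cos r) (r * Real.sin r) r := by
      have := (Real.hasDerivAt_sin r).fun_sub ((hasDerivAt_id r).fun_mul (Real.hasDerivAt_cos r))
      refine this.congr_deriv ?_
      simp [id]
    -- derivative of sin^2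
    have h3 : HasDerivAt (fun r : ℝ => (Real.sin r) ^ 2) (2 * Real.sin r * Real.cos r) r := by
      have := (Real.hasDerivAt_sin r).fun_pow 2
      refine this.congr_deriv ?_
      ring
    have hs2 : (Real.sin r) ^ 2 ≠ 0 := pow_ne_zero 2 hs
    constructor
    · have hn : HasDerivAt
          (fun r => p r * (r * Real.sin r) - deriv p r * (Real.sin r - r * Real.cos r))
          (deriv p r * (r * Real.sin r) + p r * (Real.sin r + r * Real.cos r)
            - (deriv (deriv p) r * (Real.sin r - r * Real.cos r) + deriv p r * (r * Real.sin r)))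
          r := (hp.mul h1).sub (hp'.mul h2)
      have := hn.fun_div h3 hs2
      refine this.congr_deriv ?_
      rw [hode']
      field_simp
      ring
    · have hn : HasDerivAt (fun r => deriv p r * Real.cos r + p r * Real.sin r)
          (deriv (deriv p) r * Real.cos r + deriv p r * (-Real.sin r)
            + (deriv p r * Real.sin r + p r * Real.cos r)) r :=
        (hp'.mul (Real.hasDerivAt_cos r)).add (hp.mul (Real.hasDerivAt_sin r))
      have := hn.fun_div h3 hs2
      refine this.congr_deriv ?_
      rw [hode']
      field_simp
      ring
  refine ⟨F1 (π / 2), F2 (π / 2), fun r hr => ?_⟩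
  have hc1 : F1 r = F1 (π / 2) := const_on_Ioo_pi F1 (fun y hy => (hder y hy).1) r hr
  have hc2 : F2 r = F2 (π / 2) := const_on_Ioo_pi F2 (fun y hy => (hder y hy).2) r hr
  have hs := hsin r hr
  have hs2 : (Real.sin r) ^ 2 ≠ 0 := pow_ne_zero 2 hs
  rw [hF1] at hc1
  rw [hF2] at hc2
  simp only [] at hc1 hc2
  rw [div_eq_iff hs2] at hc1 hc2
  have key : p r * (Real.sin r) ^ 2 =
      (F1 (π / 2) * Real.cos r + F2 (π / 2) * (Real.sin r - r * Real.cos r)) * (Real.sin r) ^ 2 := by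
    linear_combination Real.cos r * hc1 + (Real.sin r - r * Real.cos r) * hc2
  have := mul_right_cancel₀ hs2 key
  linarith
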